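/- Let X : ℝ × [0,∞) → ℝ be continuous with X(x,0) = x for every x ∈ ℝ. Suppose that for every x ∈ ℝ the trajectory t ↦ X(x,t) is nonconstant and periodic with a positive period T(x), where T : ℝ → (0,∞) is continuous. If T is not constant, then there exist points x₁ ≠ x₂ in ℝ and a time t* > 0 such that X(x₁,t*) = X(x₂,t*). -/

import Mathlib

open Set

/-- If every trajectory `t ↦ X x t` is nonconstant and periodic with a positive
period `T x` depending continuously on `x`, and `T` is not constant, then two
distinct trajectories meet at the same positive time. -/
theorem periodic_characteristics_intersect
    (X : ℝ → ℝ → ℝ) (T : ℝ → ℝ)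
    (hXcont : ContinuousOn (fun p : ℝ × ℝ => X p.1 p.2) (univ ×ˢ Ici 0))
    (hX0 : ∀ x, X x 0 = x)
    (hTpos : ∀ x, 0 < T x)
    (hTcont : Continuous T)
    (hper : ∀ x, ∀ t ∈ Ici (0:ℝ), X x (t + T x) = X x t)
    (hnonconst : ∀ x, ∃ t₁ ∈ Ici (0:ℝ), ∃ t₂ ∈ Ici (0:ℝ), X x t₁ ≠ X x t₂)
    (hTnonconst : ∃ a b : ℝ, T a ≠ T b) :
    ∃ x₁ x₂ : ℝ, x₁ ≠ x₂ ∧ ∃ t : ℝ, 0 < t ∧ X x₁ t = X x₂ t := by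
  classical
  -- get p < q with T p ≠ T q
  obtain ⟨a, b, hab⟩ := hTnonconst
  obtain ⟨p, q, hpq, hTne⟩ : ∃ p q : ℝ, p < q ∧ T p ≠ T q := by
    rcases lt_trichotomy a b with h | h | h
    · exact ⟨a, b, h, hab⟩
    · exact absurd (by rw [h]) hab
    · exact ⟨b, a, h, hab.symm⟩
  -- iteration of periodicity
  have hiter : ∀ x : ℝ, ∀ s : ℝ, 0 ≤ s → ∀ k : ℕ, X x (s + k * T x) = X x s := by
    intro x s hs k
    induction k with
    | zero => simp
    | succ k ih =>
      have h1 : (0:ℝ) ≤ s + k * T x := by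
        have := (hTpos x).le
        positivity
      have h2 : s + (k + 1 : ℕ) * T x = (s + k * T x) + T x := by push_cast; ring
      rw [h2, hper x _ (mem_Ici.mpr h1), ih]
  -- continuity in x at fixed time
  have hXy : ∀ s : ℝ, 0 ≤ s → Continuous (fun y => X y s) := by
    intro s hs
    rw [← continuousOn_univ]
    exact hXcont.comp ((continuous_id.prodMk continuous_const).continuousOn)
      (fun y _ => ⟨mem_univ _, mem_Ici.mpr hs⟩)
  -- continuity in t at fixed x
  have hXt : ∀ y : ℝ, ContinuousOn (fun t => X y t) (Ici 0) := by
    intro y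
    exact hXcont.comp ((continuous_const.prodMk continuous_id).continuousOn)
      (fun t ht => ⟨mem_univ _, ht⟩)
  -- the engine: a sign change forces a crossing
  have engine : ∀ x₁ x₂ u : ℝ, x₁ < x₂ → 0 < u → X x₂ u < X x₁ u →
      ∃ x₁ x₂ : ℝ, x₁ ≠ x₂ ∧ ∃ t : ℝ, 0 < t ∧ X x₁ t = X x₂ t := by
    intro a' b' u hab' hu hXu
    have hc : ContinuousOn (fun t => X b' t - X a' t) (Icc 0 u) :=
      ((hXt b').mono Icc_subset_Ici_self).sub ((hXt a').mono Icc_subset_Ici_self)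
    have hmem : (0:ℝ) ∈ Ioo ((fun t => X b' t - X a' t) u) ((fun t => X b' t - X a' t) 0) := by
      constructor
      · simpa using sub_neg.mpr hXu
      · simp only [hX0]
        exact sub_pos.mpr hab'
    obtain ⟨t, ht, hht⟩ := intermediate_value_Ioo' hu.le hc hmem
    refine ⟨a', b', hab'.ne, t, ht.1, ?_⟩
    have h' : X b' t - X a' t = 0 := hht
    linarith
  -- boundary point r of the level set of T
  have hS : ∃ r, r ∈ Icc p q ∧ T r = T p ∧ ∀ y, r < y → y ≤ q → T y ≠ T p := by
    set S : Set ℝ := Icc p q ∩ T ⁻¹' {T p} with hSdef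
    have hne : S.Nonempty := ⟨p, ⟨le_refl p, hpq.le⟩, rfl⟩
    have hbdd : BddAbove S := ⟨q, fun x hx => hx.1.2⟩
    have hclosed : IsClosed S := isClosed_Icc.inter (isClosed_singleton.preimage hTcont)
    have hmem := hclosed.csSup_mem hne hbdd
    refine ⟨sSup S, hmem.1, hmem.2, ?_⟩
    intro y hy hyq hTy
    have hpy : p ≤ y := le_trans hmem.1.1 hy.le
    exact absurd (le_csSup hbdd (⟨⟨hpy, hyq⟩, hTy⟩ : y ∈ S)) (not_le.mpr hy)
  obtain ⟨r, hrIcc, hTr, hvar⟩ := hS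
  have hrq : r < q := lt_of_le_of_ne hrIcc.2 (by
    intro h
    exact hTne ((h ▸ hTr : T q = T p).symm))
  -- nonconstancy of the trajectory of r
  obtain ⟨t₁, ht₁, t₂, ht₂, hne12⟩ := hnonconst r
  obtain ⟨s, hs, hcne⟩ : ∃ s, 0 ≤ s ∧ X r s ≠ r := by
    by_cases h : X r t₁ = r
    · exact ⟨t₂, ht₂, fun hc => hne12 (h.trans hc.symm)⟩
    · exact ⟨t₁, ht₁, h⟩
  set c := X r s with hc
  -- key IVT: hit a natural value
  have keyIVT : ∀ (f : ℝ → ℝ) (y₁ : ℝ), r < y₁ → ContinuousOn f (Icc r y₁) →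
      0 < f r → 0 < f y₁ → 1 < |f r - f y₁| →
      ∃ y, y ∈ Ioo r y₁ ∧ ∃ k : ℕ, 1 ≤ k ∧ f y = k := by
    intro f y₁ h1 hcf hfr hfy hgap
    rcases lt_or_ge (f r) (f y₁) with hlt | hle
    · have hg : f r + 1 < f y₁ := by
        rw [abs_of_neg (by linarith : f r - f y₁ < 0)] at hgap; linarith
      have hmem : ((⌊f r⌋₊ + 1 : ℕ) : ℝ) ∈ Ioo (f r) (f y₁) := by
        have ha : f r < (⌊f r⌋₊ : ℝ) + 1 := Nat.lt_floor_add_one (f r)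
        have hb : (⌊f r⌋₊ : ℝ) ≤ f r := Nat.floor_le hfr.le
        constructor <;> push_cast <;> linarith
      obtain ⟨y, hy, hfy'⟩ := intermediate_value_Ioo h1.le hcf hmem
      exact ⟨y, hy, ⌊f r⌋₊ + 1, Nat.le_add_left 1 _, hfy'⟩
    · have hg : f y₁ + 1 < f r := by
        rw [abs_of_nonneg (by linarith : (0:ℝ) ≤ f r - f y₁)] at hgap; linarith
      have hmem : ((⌊f y₁⌋₊ + 1 : ℕ) : ℝ) ∈ Ioo (f y₁) (f r) := by
        have ha : f y₁ < (⌊f y₁⌋₊ : ℝ) + 1 := Nat.lt_floor_add_one (f y₁)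
        have hb : (⌊f y₁⌋₊ : ℝ) ≤ f y₁ := Nat.floor_le hfy.le
        constructor <;> push_cast <;> linarith
      obtain ⟨y, hy, hfy'⟩ := intermediate_value_Ioo' h1.le hcf hmem
      exact ⟨y, hy, ⌊f y₁⌋₊ + 1, Nat.le_add_left 1 _, hfy'⟩
  rcases lt_or_gt_of_ne hcne with hclt | hcgt
  · -- case c < r
    have hgcont : Continuous (fun y => X y s) := hXy s hs
    have hev : ∀ᶠ y in nhds r, X y s < r :=
      hgcont.continuousAt.eventually_lt continuousAt_const hclt
    obtain ⟨ε, hε, hball⟩ := Metric.eventually_nhds_iff.mp hev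
    set y₁ := min (r + ε/2) q with hy₁def
    have hry₁ : r < y₁ := lt_min (by linarith) hrq
    have hTy₁ : T y₁ ≠ T r := by
      rw [hTr]; exact hvar y₁ hry₁ (min_le_right _ _)
    have hδ : 0 < |T r - T y₁| := abs_pos.mpr (sub_ne_zero.mpr (Ne.symm hTy₁))
    obtain ⟨m, hm⟩ := exists_nat_gt (T r / |T r - T y₁|)
    have hm0 : (0:ℝ) < m := lt_of_le_of_lt (le_of_lt (div_pos (hTpos r) hδ)) hm
    set f : ℝ → ℝ := fun y => (s + m * T y) / T r with hfdef
    have hcf : ContinuousOn f (Icc r y₁) := by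
      apply Continuous.continuousOn
      exact (continuous_const.add (continuous_const.mul hTcont)).div_const _
    have hfpos : ∀ y, 0 < f y := by
      intro y
      apply div_pos _ (hTpos r)
      nlinarith [hTpos y]
    have hgap : 1 < |f r - f y₁| := by
      have hd : f r - f y₁ = m * (T r - T y₁) / T r := by
        rw [hfdef]; field_simp; ring
      rw [hd, abs_div, abs_of_pos (hTpos r), abs_mul, abs_of_pos hm0]
      rw [div_lt_iff₀ hδ] at hm
      rw [lt_div_iff₀ (hTpos r)]
      linarith
    obtain ⟨y, hy, n, hn1, hfy⟩ := keyIVT f y₁ hry₁ hcf (hfpos r) (hfpos y₁) hgap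
    have heq : s + m * T y = n * T r := by
      have h' : (s + m * T y) / T r = (n:ℝ) := hfy
      rw [div_eq_iff (hTpos r).ne'] at h'
      linarith
    have hupos : 0 < (n:ℝ) * T r := by
      have h1 : (1:ℝ) ≤ n := by exact_mod_cast hn1
      nlinarith [hTpos r]
    have hXru : X r ((n:ℝ) * T r) = r := by
      have := hiter r 0 le_rfl n
      simpa [hX0] using this
    have hXyu : X y ((n:ℝ) * T r) = X y s := by
      rw [← heq]
      exact hiter y s hs m
    have hys : X y s < r := by
      apply hball
      have hyy : y < r + ε/2 := lt_of_lt_of_le hy.2 (min_le_left _ _)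
      have habs : |y - r| < ε := by
        rw [abs_of_pos (sub_pos.mpr hy.1)]; linarith
      simpa [Real.dist_eq] using habs
    exact engine r y _ hy.1 hupos (by rw [hXyu, hXru]; exact hys)
  · -- case c > r
    set y₁ := min ((r + c)/2) q with hy₁def
    have hry₁ : r < y₁ := lt_min (by linarith) hrq
    have hy₁c : y₁ < c := lt_of_le_of_lt (min_le_left _ _) (by linarith)
    have hTy₁ : T y₁ ≠ T r := by
      rw [hTr]; exact hvar y₁ hry₁ (min_le_right _ _)
    have hδ : 0 < |1 / T r - 1 / T y₁| := by
      rw [abs_pos, sub_ne_zero]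
      simp only [one_div]
      exact fun h => hTy₁ (inv_injective h).symm
    obtain ⟨n, hn⟩ := exists_nat_gt (1 / (T r * |1 / T r - 1 / T y₁|))
    have hn0 : (0:ℝ) < n :=
      lt_of_le_of_lt (le_of_lt (div_pos one_pos (mul_pos (hTpos r) hδ))) hn
    set f : ℝ → ℝ := fun y => (s + n * T r) / T y with hfdef
    have hnum : 0 < s + (n:ℝ) * T r := by nlinarith [hTpos r]
    have hcf : ContinuousOn f (Icc r y₁) := by
      apply Continuous.continuousOn
      exact continuous_const.div hTcont (fun y => (hTpos y).ne')
    have hfpos : ∀ y, 0 < f y := fun y => div_pos hnum (hTpos y)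
    have hgap : 1 < |f r - f y₁| := by
      have hrw : f r - f y₁ = (s + n * T r) * (1 / T r - 1 / T y₁) := by
        rw [hfdef]
        field_simp [(hTpos r).ne', (hTpos y₁).ne']
      rw [hrw, abs_mul, abs_of_pos hnum]
      rw [div_lt_iff₀ (mul_pos (hTpos r) hδ)] at hn
      nlinarith [mul_nonneg hs hδ.le]
    obtain ⟨y, hy, m, hm1, hfy⟩ := keyIVT f y₁ hry₁ hcf (hfpos r) (hfpos y₁) hgap
    have heq : s + (n:ℝ) * T r = m * T y := by
      have h' : (s + n * T r) / T y = (m:ℝ) := hfy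
      rw [div_eq_iff (hTpos y).ne'] at h'
      linarith
    have hXru : X r (s + (n:ℝ) * T r) = c := hiter r s hs n
    have hXyu : X y (s + (n:ℝ) * T r) = y := by
      rw [heq]
      have := hiter y 0 le_rfl m
      simpa [hX0] using this
    exact engine r y _ hy.1 hnum (by rw [hXyu, hXru]; linarith [hy.2, hy₁c])
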